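/- arXiv:2107.08390 — 4 statements merged into one kernel-verified Lean document; each statement's English description precedes it below -/
import Mathlib

section
/- Validity of the monotonic Benders cut: let f : ℤ₊ⁿ → ℝ₊ be non-increasing with respect to the componentwise order, let m ≤ M be integer bounds, and let ȳ ∈ {m,…,M}ⁿ. For y ∈ {m,…,M}ⁿ define z_{ξ,j}(y) = 1 if y_j = ξ and 0 otherwise. Then for every y ∈ {m,…,M}ⁿ, f(y) ≥ f(ȳ) · (1 − ∑_{j=1}^{n} ∑_{ξ=ȳ_j+1}^{M} z_{ξ,j}(y)). -/
/-- Validity of the monotonic Benders cut. -/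
theorem monotonic_cut_valid (n : ℕ) (m M : ℤ) (hm0 : 0 ≤ m) (hmM : m ≤ M)
    (f : (Fin n → ℤ) → ℝ)
    (hf0 : ∀ y, 0 ≤ f y)
    (hf : ∀ y y' : Fin n → ℤ, (∀ j, y j ≤ y' j) → f y' ≤ f y)
    (ybar : Fin n → ℤ) (hybar : ∀ j, m ≤ ybar j ∧ ybar j ≤ M)
    (y : Fin n → ℤ) (hy : ∀ j, m ≤ y j ∧ y j ≤ M) :
    f y ≥ f ybar *
      (1 - ∑ j : Fin n, ∑ ξ ∈ Finset.Icc (ybar j + 1) M,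
        (if y j = ξ then (1 : ℝ) else 0)) := by
  have hinner : ∀ j : Fin n,
      (∑ ξ ∈ Finset.Icc (ybar j + 1) M, (if y j = ξ then (1 : ℝ) else 0))
        = if ybar j < y j then 1 else 0 := by
    intro j
    rw [Finset.sum_ite_eq (Finset.Icc (ybar j + 1) M) (y j) (fun _ => (1:ℝ))]
    simp only [Finset.mem_Icc]
    by_cases h : ybar j < y j
    · rw [if_pos ⟨by omega, (hy j).2⟩, if_pos h]
    · rw [if_neg (by omega), if_neg h]
  simp only [hinner]
  by_cases hcase : ∀ j, y j ≤ ybar j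
  · have hs : (∑ j : Fin n, (if ybar j < y j then (1:ℝ) else 0)) = 0 := by
      apply Finset.sum_eq_zero
      intro j _
      rw [if_neg (not_lt.mpr (hcase j))]
    rw [hs]
    simpa using hf y ybar hcase
  · push_neg at hcase
    obtain ⟨j, hj⟩ := hcase
    have h1 : (1:ℝ) ≤ ∑ j : Fin n, (if ybar j < y j then (1:ℝ) else 0) := by
      calc (1:ℝ) = if ybar j < y j then (1:ℝ) else 0 := by rw [if_pos hj]
        _ ≤ _ := Finset.single_le_sum (f := fun i => if ybar i < y i then (1:ℝ) else 0) (fun i _ => by split <;> norm_num) (Finset.mem_univ j)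
    have : f ybar * (1 - ∑ j : Fin n, (if ybar j < y j then (1:ℝ) else 0)) ≤ 0 :=
      mul_nonpos_of_nonneg_of_nonpos (hf0 ybar) (by linarith)
    exact le_trans this (hf0 y)
end

section
/- Validity of the local Benders cut: let f : ℤ₊ⁿ → ℝ₊ be non-increasing, m ≤ M integers, ȳ ∈ {m,…,M}ⁿ, and L ⊆ {1,…,n}. Define Δ(L, ȳ) ∈ ℤ₊ⁿ by Δ(L, ȳ)_j = ȳ_j if j ∈ L and Δ(L, ȳ)_j = M otherwise. If f(Δ(L, ȳ)) = f(ȳ), then for all y ∈ {m,…,M}ⁿ, f(y) ≥ f(ȳ) · (1 − ∑_{j ∈ L} ∑_{ξ=ȳ_j+1}^{M} z_{ξ,j}(y)), where z_{ξ,j}(y) is the indicator that y_j = ξ. -/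
/-- Validity of the local Benders cut. -/
theorem local_cut_valid (n : ℕ) (m M : ℤ) (hm0 : 0 ≤ m) (hmM : m ≤ M)
    (f : (Fin n → ℤ) → ℝ)
    (hf0 : ∀ y, 0 ≤ f y)
    (hf : ∀ y y' : Fin n → ℤ, (∀ j, y j ≤ y' j) → f y' ≤ f y)
    (ybar : Fin n → ℤ) (hybar : ∀ j, m ≤ ybar j ∧ ybar j ≤ M)
    (L : Finset (Fin n))
    (hL : f (fun j => if j ∈ L then ybar j else M) = f ybar)
    (y : Fin n → ℤ) (hy : ∀ j, m ≤ y j ∧ y j ≤ M) :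
    f y ≥ f ybar *
      (1 - ∑ j ∈ L, ∑ ξ ∈ Finset.Icc (ybar j + 1) M,
        (if y j = ξ then (1 : ℝ) else 0)) := by
  by_cases h : ∀ j ∈ L, y j ≤ ybar j
  · have hsum : (∑ j ∈ L, ∑ ξ ∈ Finset.Icc (ybar j + 1) M,
        (if y j = ξ then (1 : ℝ) else 0)) = 0 := by
      apply Finset.sum_eq_zero
      intro j hj
      apply Finset.sum_eq_zero
      intro ξ hξ
      rw [Finset.mem_Icc] at hξ
      have : y j ≠ ξ := by
        have := h j hj
        omega
      simp [this]
    rw [hsum]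
    have hle : f (fun j => if j ∈ L then ybar j else M) ≤ f y := by
      apply hf
      intro j
      by_cases hj : j ∈ L
      · simp [hj, h j hj]
      · simp [hj, (hy j).2]
    simp only [sub_zero, mul_one]
    rw [← hL]
    exact hle
  · push_neg at h
    obtain ⟨j, hjL, hjy⟩ := h
    have h1 : (1 : ℝ) ≤ ∑ j ∈ L, ∑ ξ ∈ Finset.Icc (ybar j + 1) M,
        (if y j = ξ then (1 : ℝ) else 0) := by
      have hinner : (1 : ℝ) ≤ ∑ ξ ∈ Finset.Icc (ybar j + 1) M,
          (if y j = ξ then (1 : ℝ) else 0) := by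
        have hmem : y j ∈ Finset.Icc (ybar j + 1) M := by
          rw [Finset.mem_Icc]
          exact ⟨by omega, (hy j).2⟩
        calc (1 : ℝ) = if y j = y j then (1:ℝ) else 0 := by simp
          _ ≤ _ := Finset.single_le_sum (f := fun ξ => if y j = ξ then (1:ℝ) else 0)
              (fun ξ _ => by positivity) hmem
      calc (1 : ℝ) ≤ _ := hinner
        _ ≤ _ := Finset.single_le_sum
            (f := fun j => ∑ ξ ∈ Finset.Icc (ybar j + 1) M,
              (if y j = ξ then (1 : ℝ) else 0))
            (fun i _ => Finset.sum_nonneg fun ξ _ => by positivity) hjL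
    have : f ybar * (1 - ∑ j ∈ L, ∑ ξ ∈ Finset.Icc (ybar j + 1) M,
        (if y j = ξ then (1 : ℝ) else 0)) ≤ 0 :=
      mul_nonpos_of_nonneg_of_nonpos (hf0 _) (by linarith)
    linarith [hf0 y]
end

section
/- Validity of the strengthened Benders cut: let f : ℤ₊ⁿ → ℝ₊ be non-increasing, fix an index p ∈ {1,…,n}, bounds m ≤ M, ȳ ∈ {m,…,M}ⁿ, and L ⊆ {1,…,n} with p ∈ L such that f(Δ(L, ȳ)) = f(ȳ). For ξ ∈ {m,…,M} define I(ξ) = f(v^ξ) where v^ξ_p = ξ and v^ξ_j = M for j ≠ p, and define Base = I(ȳ_p). Then for every y ∈ {m,…,M}ⁿ: f(y) ≥ f(ȳ) − ∑_{ξ=ȳ_p+1}^{M} (f(ȳ) − I(ξ)) z_{ξ,p}(y) − (f(ȳ) − Base) ∑_{j ∈ L∖{p}} ∑_{ξ=ȳ_j+1}^{M} z_{ξ,j}(y). -/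
/-- Validity of the strengthened Benders cut. -/
theorem strengthened_cut_valid (n : ℕ) (m M : ℤ) (hm0 : 0 ≤ m) (hmM : m ≤ M)
    (f : (Fin n → ℤ) → ℝ)
    (hf0 : ∀ y, 0 ≤ f y)
    (hf : ∀ y y' : Fin n → ℤ, (∀ j, y j ≤ y' j) → f y' ≤ f y)
    (p : Fin n)
    (ybar : Fin n → ℤ) (hybar : ∀ j, m ≤ ybar j ∧ ybar j ≤ M)
    (L : Finset (Fin n)) (hpL : p ∈ L)
    (hL : f (fun j => if j ∈ L then ybar j else M) = f ybar)
    (I : ℤ → ℝ) (hI : ∀ ξ, I ξ = f (fun j => if j = p then ξ else M))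
    (y : Fin n → ℤ) (hy : ∀ j, m ≤ y j ∧ y j ≤ M) :
    f y ≥ f ybar
      - ∑ ξ ∈ Finset.Icc (ybar p + 1) M,
          (f ybar - I ξ) * (if y p = ξ then (1 : ℝ) else 0)
      - (f ybar - I (ybar p)) *
          ∑ j ∈ L.erase p, ∑ ξ ∈ Finset.Icc (ybar j + 1) M,
            (if y j = ξ then (1 : ℝ) else 0) := by
  -- collapse the first sum
  have hA : ∑ ξ ∈ Finset.Icc (ybar p + 1) M,
      (f ybar - I ξ) * (if y p = ξ then (1 : ℝ) else 0)
      = if y p ∈ Finset.Icc (ybar p + 1) M then f ybar - I (y p) else 0 := by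
    rw [Finset.sum_congr rfl (fun ξ _ => by rw [mul_ite, mul_one, mul_zero])]
    exact Finset.sum_ite_eq _ _ _
  have hB : ∀ j : Fin n, ∑ ξ ∈ Finset.Icc (ybar j + 1) M,
      (if y j = ξ then (1 : ℝ) else 0)
      = if y j ∈ Finset.Icc (ybar j + 1) M then 1 else 0 :=
    fun j => Finset.sum_ite_eq _ _ _
  rw [hA, Finset.sum_congr rfl (fun j _ => hB j)]
  set S : ℝ := ∑ j ∈ L.erase p,
      (if y j ∈ Finset.Icc (ybar j + 1) M then (1 : ℝ) else 0) with hS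
  have hS0 : 0 ≤ S := Finset.sum_nonneg (fun j _ => by positivity)
  have hBase : I (ybar p) ≤ f ybar := by
    rw [hI]; apply hf; intro j
    by_cases h : j = p <;> simp [h, (hybar j).2]
  -- f y ≥ I (y p)
  have hfyI : I (y p) ≤ f y := by
    rw [hI]; apply hf; intro j
    by_cases h : j = p <;> simp [h, (hy j).2]
  -- if y p ≤ ybar p then f y ≥ I (ybar p)
  have hfyBase : y p ≤ ybar p → I (ybar p) ≤ f y := by
    intro hyp
    rw [hI]; apply hf; intro j
    by_cases h : j = p <;> simp [h, (hy j).2, hyp]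
  by_cases hp : y p ∈ Finset.Icc (ybar p + 1) M
  · -- RHS = I (y p) - (f ybar - Base) * S ≤ I (y p) ≤ f y
    simp only [if_pos hp]
    have : (0:ℝ) ≤ (f ybar - I (ybar p)) * S :=
      mul_nonneg (by linarith) hS0
    linarith
  · simp only [if_neg hp]
    have hyple : y p ≤ ybar p := by
      rcases Finset.mem_Icc.not.mp hp with h
      push_neg at h
      by_contra hc
      push_neg at hc
      exact absurd ((hy p).2) (not_le.mpr (h hc))
    by_cases hSz : ∃ j ∈ L.erase p, y j ∈ Finset.Icc (ybar j + 1) M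
    · -- S ≥ 1
      obtain ⟨j0, hj0, hj0'⟩ := hSz
      have hS1 : (1:ℝ) ≤ S := by
        rw [hS]
        have := Finset.single_le_sum
          (f := fun j => (if y j ∈ Finset.Icc (ybar j + 1) M then (1 : ℝ) else 0))
          (fun j _ => by positivity) hj0
        rwa [if_pos hj0'] at this
      have h1 : (f ybar - I (ybar p)) * 1 ≤ (f ybar - I (ybar p)) * S :=
        mul_le_mul_of_nonneg_left hS1 (by linarith)
      have := hfyBase hyple
      linarith
    · -- all indicators zero, so S = 0 and y ≤ Δ(L, ybar)
      push_neg at hSz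
      have hSzero : S = 0 :=
        Finset.sum_eq_zero (fun j hj => if_neg (hSz j hj))
      have hyle : f ybar ≤ f y := by
        rw [← hL]; apply hf; intro j
        by_cases hjL : j ∈ L
        · simp only [if_pos hjL]
          by_cases hjp : j = p
          · subst hjp; exact hyple
          · have hj : j ∈ L.erase p := Finset.mem_erase.mpr ⟨hjp, hjL⟩
            have := hSz j hj
            rw [Finset.mem_Icc] at this
            push_neg at this
            have h2 := (hy j).2
            omega
        · simp only [if_neg hjL]; exact (hy j).2
      rw [hSzero]
      linarith
end

section
/- Strengthened two-dimensional initial cut validity: let f : ℤ₊ⁿ → ℝ₊ be non-increasing, p ≠ l indices, and W(ξ₁, ξ₂) = f(w) with w_p = ξ₁, w_l = ξ₂, w_j = M otherwise. Fix ξ₁ ∈ {m,…,M}. Then for every y ∈ {m,…,M}ⁿ: f(y) ≥ ∑_{ξ₂=m}^{M} W(ξ₁, ξ₂) z_{ξ₂,l}(y) − ∑_{ξ'=ξ₁+1}^{M} [ max_{ξ₂ ∈ {m,…,M}} ( W(ξ₁, ξ₂) − W(ξ', ξ₂) ) ] z_{ξ',p}(y). -/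
/-- Strengthened two-dimensional initial cut validity. -/
theorem initial_cut_2d_strong_valid (n : ℕ) (m M : ℤ) (hm0 : 0 ≤ m) (hmM : m ≤ M)
    (hIcc : (Finset.Icc m M).Nonempty)
    (f : (Fin n → ℤ) → ℝ)
    (hf0 : ∀ y, 0 ≤ f y)
    (hf : ∀ y y' : Fin n → ℤ, (∀ j, y j ≤ y' j) → f y' ≤ f y)
    (p l : Fin n) (hpl : p ≠ l)
    (W : ℤ → ℤ → ℝ)
    (hW : ∀ ξ₁ ξ₂, W ξ₁ ξ₂ =
      f (fun j => if j = p then ξ₁ else if j = l then ξ₂ else M))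
    (ξ₁ : ℤ) (hξ₁ : ξ₁ ∈ Finset.Icc m M)
    (y : Fin n → ℤ) (hy : ∀ j, m ≤ y j ∧ y j ≤ M) :
    f y ≥ (∑ ξ₂ ∈ Finset.Icc m M, W ξ₁ ξ₂ * (if y l = ξ₂ then (1 : ℝ) else 0))
      - ∑ ξ' ∈ Finset.Icc (ξ₁ + 1) M,
          ((Finset.Icc m M).sup' hIcc (fun ξ₂ => W ξ₁ ξ₂ - W ξ' ξ₂)) *
            (if y p = ξ' then (1 : ℝ) else 0) := by
  obtain ⟨hm1, hM1⟩ := Finset.mem_Icc.mp hξ₁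
  have hyl := hy l
  have hyp := hy p
  have hsum1 : (∑ ξ₂ ∈ Finset.Icc m M, W ξ₁ ξ₂ * (if y l = ξ₂ then (1:ℝ) else 0))
      = W ξ₁ (y l) := by
    rw [Finset.sum_eq_single (y l)]
    · simp
    · intro b _ hb; simp [Ne.symm hb]
    · intro h; exact absurd (Finset.mem_Icc.mpr ⟨hyl.1, hyl.2⟩) h
  rw [hsum1]
  by_cases hcase : y p ≤ ξ₁
  · have hsum2 : (∑ ξ' ∈ Finset.Icc (ξ₁ + 1) M,
        ((Finset.Icc m M).sup' hIcc (fun ξ₂ => W ξ₁ ξ₂ - W ξ' ξ₂)) *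
          (if y p = ξ' then (1:ℝ) else 0)) = 0 := by
      apply Finset.sum_eq_zero
      intro ξ' hξ'
      have h1 := (Finset.mem_Icc.mp hξ').1
      have : y p ≠ ξ' := by omega
      simp [this]
    rw [hsum2, sub_zero]
    rw [hW]
    apply hf
    intro j
    by_cases hj : j = p
    · subst hj; simpa using hcase
    · by_cases hj2 : j = l
      · subst hj2; simp [hj]
      · simp [hj, hj2, (hy j).2]
  · push_neg at hcase
    set ξ' := y p with hξ'def
    have hmem : ξ' ∈ Finset.Icc (ξ₁ + 1) M := Finset.mem_Icc.mpr ⟨by omega, hyp.2⟩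
    have hsum2 : (∑ ξ'' ∈ Finset.Icc (ξ₁ + 1) M,
        ((Finset.Icc m M).sup' hIcc (fun ξ₂ => W ξ₁ ξ₂ - W ξ'' ξ₂)) *
          (if y p = ξ'' then (1:ℝ) else 0))
        = (Finset.Icc m M).sup' hIcc (fun ξ₂ => W ξ₁ ξ₂ - W ξ' ξ₂) := by
      rw [Finset.sum_eq_single ξ']
      · simp [← hξ'def]
      · intro b _ hb; simp [← hξ'def, Ne.symm hb]
      · intro h; exact absurd hmem h
    rw [hsum2]
    have hsup : W ξ₁ (y l) - W ξ' (y l)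
        ≤ (Finset.Icc m M).sup' hIcc (fun ξ₂ => W ξ₁ ξ₂ - W ξ' ξ₂) :=
      Finset.le_sup' (f := fun ξ₂ => W ξ₁ ξ₂ - W ξ' ξ₂) (Finset.mem_Icc.mpr ⟨hyl.1, hyl.2⟩)
    have hfy : W ξ' (y l) ≤ f y := by
      rw [hW]; apply hf; intro j
      by_cases hj : j = p
      · subst hj; simp [hξ'def]
      · by_cases hj2 : j = l
        · subst hj2; simp [hj]
        · simp [hj, hj2, (hy j).2]
    linarith
end
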